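/- Let u be a finite-dimensional real unimodular Lie algebra with inner product, decomposed orthogonally as u = k ⊕ m, and let X, Y ∈ m satisfy [k,X] = [k,Y] = 0. Then Ric(X,Y) := −(1/2)Σ_{i,j}⟨[X,X_i]_m,X_j⟩⟨[Y,X_i]_m,X_j⟩ + (1/4)Σ_{i,j}⟨[X_i,X_j]_m,X⟩⟨[X_i,X_j]_m,Y⟩ − (1/2)B(X,Y) equals (1/4)Σ_{i,j}⟨[X_i,X_j]_m,X⟩⟨[X_i,X_j]_m,Y⟩ − tr(S(ad_m X)S(ad_m Y)), where {X_i} is an orthonormal basis of m, B is the Killing form of u, [·,·]_m is the bracket projected to m, and S(A) = (A+Aᵗ)/2. -/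

import Mathlib

open scoped InnerProductSpace
open Module

variable {u : Type*} [NormedAddCommGroup u] [InnerProductSpace ℝ u] [FiniteDimensional ℝ u]

/-- The symmetric part `S(A) = (A + Aᵗ)/2`. -/
noncomputable def symmPart {E : Type*} [NormedAddCommGroup E] [InnerProductSpace ℝ E]
    [FiniteDimensional ℝ E] (A : E →ₗ[ℝ] E) : E →ₗ[ℝ] E :=
  ((1 : ℝ) / 2) • (A + LinearMap.adjoint A)

/-- `ad_m Y`: the bracket with `Y` followed by orthogonal projection onto `m`. -/
noncomputable def adm (lie : u →ₗ[ℝ] u →ₗ[ℝ] u) (m : Submodule ℝ u) (Y : u) :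
    ↥m →ₗ[ℝ] ↥m :=
  (Submodule.orthogonalProjectionOnto m).toLinearMap ∘ₗ (lie Y) ∘ₗ m.subtype

private lemma trace_eq_sum_inner_onb {E : Type*} [NormedAddCommGroup E] [InnerProductSpace ℝ E]
    [FiniteDimensional ℝ E] {ι : Type*} [Fintype ι] [DecidableEq ι]
    (b : OrthonormalBasis ι ℝ E) (T : E →ₗ[ℝ] E) :
    LinearMap.trace ℝ E T = ∑ i, ⟪T (b i), b i⟫_ℝ := by
  rw [LinearMap.trace_eq_matrix_trace ℝ b.toBasis, Matrix.trace]
  congr 1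
  ext i
  rw [Matrix.diag, LinearMap.toMatrix_apply, b.coe_toBasis, b.coe_toBasis_repr_apply,
    b.repr_apply_apply, real_inner_comm]

private lemma trace_adjoint_eq {E : Type*} [NormedAddCommGroup E] [InnerProductSpace ℝ E]
    [FiniteDimensional ℝ E] {ι : Type*} [Fintype ι] [DecidableEq ι]
    (b : OrthonormalBasis ι ℝ E) (T : E →ₗ[ℝ] E) :
    LinearMap.trace ℝ E (LinearMap.adjoint T) = LinearMap.trace ℝ E T := by
  rw [trace_eq_sum_inner_onb b, trace_eq_sum_inner_onb b]
  simp [LinearMap.adjoint_inner_left, real_inner_comm]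

/-- Lemma 2.9 of the paper: for a unimodular Lie algebra `u` with inner product and
orthogonal decomposition `u = k ⊕ m` (`k = mᗮ`), if `X, Y ∈ m` satisfy `[k,X] = [k,Y] = 0`,
then the Ricci expression (with the Killing form `B(X,Y) = tr(ad X ∘ ad Y)`) equals
`(1/4) Σ ⟨[Xᵢ,Xⱼ]_m,X⟩⟨[Xᵢ,Xⱼ]_m,Y⟩ − tr (S(ad_m X) S(ad_m Y))`. -/
theorem ricci_formula_unimodular
    (lie : u →ₗ[ℝ] u →ₗ[ℝ] u)
    (hanti : ∀ X : u, lie X X = 0)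
    (hjacobi : ∀ X Y Z : u, lie X (lie Y Z) = lie (lie X Y) Z + lie Y (lie X Z))
    (hunimod : ∀ X : u, LinearMap.trace ℝ u (lie X) = 0)
    (m : Submodule ℝ u) {ι : Type*} [Fintype ι] (b : OrthonormalBasis ι ℝ ↥m)
    (X Y : ↥m)
    (hkX : ∀ Z ∈ mᗮ, lie Z (X : u) = 0)
    (hkY : ∀ Z ∈ mᗮ, lie Z (Y : u) = 0) :
    -(1 / 2 : ℝ) * (∑ i, ∑ j,
        ⟪Submodule.orthogonalProjectionOnto m (lie (X : u) (b i : u)), b j⟫_ℝ *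
          ⟪Submodule.orthogonalProjectionOnto m (lie (Y : u) (b i : u)), b j⟫_ℝ)
      + (1 / 4 : ℝ) * (∑ i, ∑ j,
        ⟪Submodule.orthogonalProjectionOnto m (lie (b i : u) (b j : u)), X⟫_ℝ *
          ⟪Submodule.orthogonalProjectionOnto m (lie (b i : u) (b j : u)), Y⟫_ℝ)
      - (1 / 2 : ℝ) * LinearMap.trace ℝ u (lie (X : u) ∘ₗ lie (Y : u))
    = (1 / 4 : ℝ) * (∑ i, ∑ j,
        ⟪Submodule.orthogonalProjectionOnto m (lie (b i : u) (b j : u)), X⟫_ℝ *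
          ⟪Submodule.orthogonalProjectionOnto m (lie (b i : u) (b j : u)), Y⟫_ℝ)
      - LinearMap.trace ℝ ↥m (symmPart (adm lie m (X : u)) ∘ₗ symmPart (adm lie m (Y : u))) := by
  classical
  set A := adm lie m (X : u) with hA
  set B := adm lie m (Y : u) with hB
  -- antisymmetry of the bracket
  have hanti' : ∀ a c : u, lie a c = -lie c a := by
    intro a c
    have h := hanti (a + c)
    simp only [map_add, LinearMap.add_apply, hanti, zero_add, add_zero] at h
    exact eq_neg_of_add_eq_zero_right h
  -- X and Y bracket trivially with k = mᗮ on the other side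
  have hXk : ∀ W ∈ mᗮ, lie (X : u) W = 0 := by
    intro W hW; rw [hanti', hkX W hW, neg_zero]
  have hYk : ∀ W ∈ mᗮ, lie (Y : u) W = 0 := by
    intro W hW; rw [hanti', hkY W hW, neg_zero]
  -- key: replacing argument by its projection
  have key : ∀ a : u, (∀ W ∈ mᗮ, lie a W = 0) → ∀ v : u,
      lie a v = lie a ((Submodule.orthogonalProjectionOnto m v : ↥m) : u) := by
    intro a ha v
    have h := ha _ (Submodule.sub_starProjection_mem_orthogonal (K := m) v)
    rw [map_sub] at h
    exact (sub_eq_zero.mp h)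
  -- the trace over u equals the trace of A ∘ B over m
  have hdecomp : (lie (X : u)) ∘ₗ (lie (Y : u))
      = ((lie (X : u)) ∘ₗ m.subtype ∘ₗ B) ∘ₗ (Submodule.orthogonalProjectionOnto m).toLinearMap := by
    ext Z
    simp only [LinearMap.comp_apply, hB, adm, ContinuousLinearMap.coe_coe,
      Submodule.coe_subtype]
    rw [key (Y : u) hYk Z, key (X : u) hXk (lie (Y : u) ((Submodule.orthogonalProjectionOnto m Z : ↥m) : u))]
  have htr : LinearMap.trace ℝ u ((lie (X : u)) ∘ₗ (lie (Y : u)))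
      = LinearMap.trace ℝ ↥m (A ∘ₗ B) := by
    rw [hdecomp, LinearMap.trace_comp_comm']
    have hcomp : (Submodule.orthogonalProjectionOnto m).toLinearMap ∘ₗ ((lie (X : u)) ∘ₗ m.subtype ∘ₗ B)
        = A ∘ₗ B := by
      ext v
      simp [hA, adm]
    rw [hcomp]
  -- the first double sum equals tr (A† ∘ B)
  have hsum1 : (∑ i, ∑ j,
      ⟪Submodule.orthogonalProjectionOnto m (lie (X : u) (b i : u)), b j⟫_ℝ *
        ⟪Submodule.orthogonalProjectionOnto m (lie (Y : u) (b i : u)), b j⟫_ℝ)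
      = LinearMap.trace ℝ ↥m (LinearMap.adjoint A ∘ₗ B) := by
    rw [trace_eq_sum_inner_onb b]
    refine Finset.sum_congr rfl fun i _ => ?_
    have h1 : ∀ j, ⟪Submodule.orthogonalProjectionOnto m (lie (X : u) (b i : u)), b j⟫_ℝ = ⟪A (b i), b j⟫_ℝ := by
      intro j; simp [hA, adm]
    have h2 : ∀ j, ⟪Submodule.orthogonalProjectionOnto m (lie (Y : u) (b i : u)), b j⟫_ℝ = ⟪B (b i), b j⟫_ℝ := by
      intro j; simp [hB, adm]
    simp only [h1, h2]
    rw [LinearMap.comp_apply, LinearMap.adjoint_inner_left]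
    rw [← b.sum_inner_mul_inner (B (b i)) (A (b i))]
    refine Finset.sum_congr rfl fun j _ => ?_
    rw [real_inner_comm (b j) (A (b i))]
    ring
  -- trace of the symmetric parts
  have hadjcomp : LinearMap.trace ℝ ↥m (LinearMap.adjoint A ∘ₗ LinearMap.adjoint B)
      = LinearMap.trace ℝ ↥m (A ∘ₗ B) := by
    rw [← LinearMap.adjoint_comp, trace_adjoint_eq b, LinearMap.trace_comp_comm']
  have hmix : LinearMap.trace ℝ ↥m (A ∘ₗ LinearMap.adjoint B)
      = LinearMap.trace ℝ ↥m (LinearMap.adjoint A ∘ₗ B) := by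
    have : A ∘ₗ LinearMap.adjoint B
        = LinearMap.adjoint (B ∘ₗ LinearMap.adjoint A) := by
      rw [LinearMap.adjoint_comp, LinearMap.adjoint_adjoint]
    rw [this, trace_adjoint_eq b, LinearMap.trace_comp_comm']
  have hS : LinearMap.trace ℝ ↥m (symmPart A ∘ₗ symmPart B)
      = (1 / 2 : ℝ) * LinearMap.trace ℝ ↥m (A ∘ₗ B)
        + (1 / 2 : ℝ) * LinearMap.trace ℝ ↥m (LinearMap.adjoint A ∘ₗ B) := by
    have hexp : symmPart A ∘ₗ symmPart B
        = ((1 : ℝ) / 4) • (A ∘ₗ B + A ∘ₗ LinearMap.adjoint B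
            + LinearMap.adjoint A ∘ₗ B + LinearMap.adjoint A ∘ₗ LinearMap.adjoint B) := by
      simp only [symmPart, LinearMap.comp_smul, LinearMap.smul_comp, LinearMap.add_comp,
        LinearMap.comp_add, smul_smul]
      module
    rw [hexp, map_smul, map_add, map_add, map_add, hadjcomp, hmix]
    simp only [smul_eq_mul]
    ring
  rw [htr, hsum1, hS]
  ring
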